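/- Fix D ∈ ℕ and let X, Y : Ω → (Fin D → ℝ) be independent random vectors such that every coordinate X_i and Y_i is square-integrable. Then E[‖X − Y‖₂²] − ( Σ_i (E[X_i] − E[Y_i])² + Σ_i (√(Var(X_i)) − √(Var(Y_i)))² ) = 2 Σ_i √(Var(X_i))·√(Var(Y_i)), and in particular E[‖X − Y‖₂²] ≥ Σ_i (E[X_i] − E[Y_i])² + Σ_i (√(Var(X_i)) − √(Var(Y_i)))². -/

import Mathlib

open MeasureTheory ProbabilityTheory
open scoped NNReal

/-- **Gap between the CSD and the Gaussian Wasserstein closed form.** For independent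
random vectors `X, Y` with square-integrable coordinates, the CSD `E[‖X − Y‖₂²]`
exceeds `‖E X − E Y‖₂² + Σᵢ (√Var(Xᵢ) − √Var(Yᵢ))²` by exactly
`2 Σᵢ √Var(Xᵢ)·√Var(Yᵢ)`; in particular the CSD dominates the Wasserstein form. -/
theorem csd_sub_wasserstein_gap
    {Ω : Type*} [MeasurableSpace Ω] (P : Measure Ω) [IsProbabilityMeasure P]
    (D : ℕ) (X Y : Ω → (Fin D → ℝ)) (hX : Measurable X) (hY : Measurable Y)
    (hindep : IndepFun X Y P)
    (hX2 : ∀ i, MemLp (fun ω => X ω i) 2 P)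
    (hY2 : ∀ i, MemLp (fun ω => Y ω i) 2 P) :
    ((∫ ω, (∑ i, (X ω i - Y ω i) ^ 2) ∂P)
      - ((∑ i, ((∫ ω, X ω i ∂P) - ∫ ω, Y ω i ∂P) ^ 2)
          + ∑ i, (Real.sqrt (variance (fun ω => X ω i) P)
                    - Real.sqrt (variance (fun ω => Y ω i) P)) ^ 2)
      = 2 * ∑ i, Real.sqrt (variance (fun ω => X ω i) P)
                  * Real.sqrt (variance (fun ω => Y ω i) P))
    ∧ (∫ ω, (∑ i, (X ω i - Y ω i) ^ 2) ∂P
        ≥ (∑ i, ((∫ ω, X ω i ∂P) - ∫ ω, Y ω i ∂P) ^ 2)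
          + ∑ i, (Real.sqrt (variance (fun ω => X ω i) P)
                    - Real.sqrt (variance (fun ω => Y ω i) P)) ^ 2) := by
  have hf : ∀ i : Fin D, MemLp (fun ω => X ω i - Y ω i) 2 P :=
    fun i => (hX2 i).sub (hY2 i)
  have key : ∀ i : Fin D,
      (∫ ω, (X ω i - Y ω i) ^ 2 ∂P)
        = ((∫ ω, X ω i ∂P) - ∫ ω, Y ω i ∂P) ^ 2
          + (variance (fun ω => X ω i) P + variance (fun ω => Y ω i) P) := by
    intro i
    have hind : IndepFun (fun ω => X ω i) (fun ω => Y ω i) P :=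
      hindep.comp (measurable_pi_apply i) (measurable_pi_apply i)
    have hind' : IndepFun (fun ω => X ω i) (fun ω => -(Y ω i)) P :=
      hind.comp measurable_id measurable_neg
    have hvadd := hind'.variance_add (hX2 i) ((hY2 i).neg)
    have hneg : variance (fun ω => -(Y ω i)) P = variance (fun ω => Y ω i) P := by
      have := variance_smul (-1 : ℝ) (fun ω => Y ω i) P
      simpa [Pi.neg_def] using this
    have hvadd2 : variance (fun ω => X ω i - Y ω i) P
        = variance (fun ω => X ω i) P + variance (fun ω => Y ω i) P := by
      rw [← hneg]
      convert hvadd using 2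
      · funext ω; simp only [Pi.add_apply, Pi.neg_apply, sub_eq_add_neg]
      · rfl

    clear hvadd
    have hvadd := hvadd2
    have hv := variance_eq_sub (hf i)
    have hint : (∫ ω, (X ω i - Y ω i) ∂P) = (∫ ω, X ω i ∂P) - ∫ ω, Y ω i ∂P :=
      integral_sub ((hX2 i).integrable one_le_two) ((hY2 i).integrable one_le_two)
    have : variance (fun ω => X ω i - Y ω i) P
        = (∫ ω, (X ω i - Y ω i) ^ 2 ∂P) - ((∫ ω, X ω i ∂P) - ∫ ω, Y ω i ∂P) ^ 2 := by
      rw [hv, hint]; rfl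
    rw [hvadd] at this
    linarith
  have hsum : (∫ ω, (∑ i, (X ω i - Y ω i) ^ 2) ∂P)
      = ∑ i, ∫ ω, (X ω i - Y ω i) ^ 2 ∂P :=
    integral_finset_sum _ (fun i _ => (hf i).integrable_sq)
  have halg : ∀ i : Fin D,
      (∫ ω, (X ω i - Y ω i) ^ 2 ∂P)
        = ((∫ ω, X ω i ∂P) - ∫ ω, Y ω i ∂P) ^ 2
          + (Real.sqrt (variance (fun ω => X ω i) P)
              - Real.sqrt (variance (fun ω => Y ω i) P)) ^ 2
          + 2 * (Real.sqrt (variance (fun ω => X ω i) P)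
              * Real.sqrt (variance (fun ω => Y ω i) P)) := by
    intro i
    have ha : Real.sqrt (variance (fun ω => X ω i) P) ^ 2
        = variance (fun ω => X ω i) P := Real.sq_sqrt (variance_nonneg _ _)
    have hb : Real.sqrt (variance (fun ω => Y ω i) P) ^ 2
        = variance (fun ω => Y ω i) P := Real.sq_sqrt (variance_nonneg _ _)
    rw [key i]
    ring_nf
    nlinarith [ha, hb]
  have main : (∫ ω, (∑ i, (X ω i - Y ω i) ^ 2) ∂P)
      - ((∑ i, ((∫ ω, X ω i ∂P) - ∫ ω, Y ω i ∂P) ^ 2)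
          + ∑ i, (Real.sqrt (variance (fun ω => X ω i) P)
                    - Real.sqrt (variance (fun ω => Y ω i) P)) ^ 2)
      = 2 * ∑ i, Real.sqrt (variance (fun ω => X ω i) P)
                  * Real.sqrt (variance (fun ω => Y ω i) P) := by
    rw [hsum, Finset.mul_sum, ← Finset.sum_add_distrib, ← Finset.sum_sub_distrib]
    apply Finset.sum_congr rfl
    intro i _
    rw [halg i]; ring
  refine ⟨main, ?_⟩
  have hnn : (0:ℝ) ≤ ∑ i, Real.sqrt (variance (fun ω => X ω i) P)
                  * Real.sqrt (variance (fun ω => Y ω i) P) :=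
    Finset.sum_nonneg fun i _ => mul_nonneg (Real.sqrt_nonneg _) (Real.sqrt_nonneg _)
  linarith
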